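/- Let T ∈ D_{g^{-1}}(H) be pure and suppose T_i* = (W_i* ⊗ I_G)|_H where H is co-invariant in F^2(H_n) ⊗ G. Then dim closure(Δ_{g^{-1}}(T,T*) H) ≤ dim G, and if the dilation is minimal (the closed span of (W_α ⊗ I_G)H is all of F^2(H_n) ⊗ G), then dim closure(Δ_{g^{-1}}(T,T*) H) = dim G. -/

import Mathlib

open scoped InnerProductSpace
open Filter

noncomputable section

/-- Words in the free semigroup `F_n^+`, encoded as lists over `Fin n`. -/
abbrev Word (n : ℕ) := List (Fin n)

/-- The full Fock space tensored with `K`, realized as `ℓ²`-sequences over words with values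
in `K`; for `K = ℂ` this is the full Fock space `F²(H_n)` with orthonormal basis `{e_α}`. -/
abbrev FockK (n : ℕ) (K : Type*) [NormedAddCommGroup K] [InnerProductSpace ℂ K] :=
  lp (fun _ : Word n => K) 2

/-- The finite set of words of length `p`. -/
def wordsLen (n p : ℕ) : Finset (Word n) :=
  (Finset.univ : Finset (List.Vector (Fin n) p)).image List.Vector.toList

variable {n : ℕ} {E : Type*} [NormedAddCommGroup E] [InnerProductSpace ℂ E] [CompleteSpace E]

/-- For a word `α = g_{i₁} ⋯ g_{i_k}`, the operator `X_α = X_{i₁} ⋯ X_{i_k}`. -/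
def wordOp (X : Fin n → (E →L[ℂ] E)) (α : Word n) : E →L[ℂ] E := (α.map X).prod

/-- Partial sums `∑_{p < N} ∑_{|α| = p} a_α X_α X_α^*` of the defect series
`Δ_{g⁻¹}(X, X^*)` associated with the coefficients `a` of `g⁻¹`. -/
def deltaPartial (a : Word n → ℝ) (X : Fin n → (E →L[ℂ] E)) (N : ℕ) : E →L[ℂ] E :=
  ∑ p ∈ Finset.range N, ∑ α ∈ wordsLen n p,
    (a α : ℂ) • (wordOp X α ∘L (wordOp X α).adjoint)

set_option maxHeartbeats 1000000
set_option synthInstance.maxHeartbeats 1000000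
set_option linter.unusedSectionVars false
set_option linter.unusedVariables false

/- ### Auxiliary material -/

lemma wordOp_nil (X : Fin n → (E →L[ℂ] E)) : wordOp X ([] : Word n) = 1 := rfl

lemma wordOp_cons (X : Fin n → (E →L[ℂ] E)) (i : Fin n) (α : Word n) :
    wordOp X (i :: α) = (X i) ∘L wordOp X α := by
  simp only [wordOp, List.map_cons, List.prod_cons]
  rfl

/-- Evaluation at the empty word, as a continuous linear map on `FockK n G`. -/
def ev0 (n : ℕ) (G : Type*) [NormedAddCommGroup G] [InnerProductSpace ℂ G]
    [CompleteSpace G] : FockK n G →L[ℂ] G :=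
  LinearMap.mkContinuous
    { toFun := fun x => (x : ∀ _ : Word n, G) ([] : Word n)
      map_add' := fun x y => by simp [lp.coeFn_add]
      map_smul' := fun c x => by simp [lp.coeFn_smul] }
    1 (fun x => by rw [one_mul]; exact lp.norm_apply_le_norm (by norm_num) x ([] : Word n))

@[simp] lemma ev0_apply {G : Type*} [NormedAddCommGroup G] [InnerProductSpace ℂ G]
    [CompleteSpace G] (x : FockK n G) :
    ev0 n G x = (x : ∀ _ : Word n, G) ([] : Word n) := rfl

section AbstractCore
variable {H G : Type*} [NormedAddCommGroup H] [InnerProductSpace ℂ H] [CompleteSpace H]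
  [NormedAddCommGroup G] [InnerProductSpace ℂ G] [CompleteSpace G]

/-- orthogonal complement of range is kernel of adjoint -/
lemma orthogonal_range' (B : H →L[ℂ] G) :
    (LinearMap.range (B : H →ₗ[ℂ] G))ᗮ = LinearMap.ker (ContinuousLinearMap.adjoint B : G →ₗ[ℂ] H) := by
  ext x
  simp only [Submodule.mem_orthogonal, LinearMap.mem_ker, ContinuousLinearMap.coe_coe]
  constructor
  · intro hx
    apply ext_inner_left ℂ
    intro y
    rw [inner_zero_right, ContinuousLinearMap.adjoint_inner_right]
    exact hx (B y) ⟨y, rfl⟩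
  · rintro hx u ⟨y, rfl⟩
    rw [ContinuousLinearMap.coe_coe, ← ContinuousLinearMap.adjoint_inner_right, hx, inner_zero_right]

lemma extend_isometry (R : Submodule ℂ H) (f0 : ↥R →ₗ[ℂ] G) (hf0 : ∀ v : R, ‖f0 v‖ = ‖v‖) :
    ∃ Φ : R.topologicalClosure →ₗᵢ[ℂ] G,
      ∀ v : R, Φ ⟨v, R.le_topologicalClosure v.2⟩ = f0 v := by
  set D := R.topologicalClosure with hD
  let F : R →L[ℂ] G := f0.mkContinuous 1 (fun v => by rw [one_mul, hf0])
  let e' : R →L[ℂ] D :=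
    LinearMap.mkContinuous (Submodule.inclusion (R.le_topologicalClosure)) 1
      (fun v => by rw [one_mul]; exact le_of_eq rfl)
  have h_e : IsUniformInducing ⇑e' := by
    refine (AddMonoidHomClass.isometry_of_norm e' (fun v => ?_)).isUniformInducing
    rfl
  have h_dense : DenseRange ⇑e' := by
    intro d
    have hd : (d : H) ∈ closure (R : Set H) := by
      rw [← Submodule.topologicalClosure_coe]
      exact d.2
    rw [mem_closure_iff_seq_limit] at hd
    obtain ⟨u, hu, hconv⟩ := hd
    rw [mem_closure_iff_seq_limit]
    refine ⟨fun k => e' ⟨u k, hu k⟩, fun k => ⟨_, rfl⟩, ?_⟩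
    rw [tendsto_subtype_rng]
    exact hconv
  let Φ0 : D →L[ℂ] G := F.extend e'
  have hΦeq : ∀ v : R, Φ0 (e' v) = F v := fun v =>
    ContinuousLinearMap.extend_eq F h_dense h_e v
  have hΦnorm : ∀ d : D, ‖Φ0 d‖ = ‖d‖ := by
    refine fun d => h_dense.induction_on d ?_ (fun v => ?_)
    · exact isClosed_eq (continuous_norm.comp Φ0.continuous) continuous_norm
    · rw [hΦeq]
      show ‖f0 v‖ = ‖e' v‖
      rw [hf0]
      rfl
  exact ⟨⟨Φ0.toLinearMap, hΦnorm⟩, fun v => hΦeq v⟩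

/-- Polar-decomposition style isometry from the closure of the range of `A†A` into `G`,
whose range contains the range of `A`. -/
lemma exists_polar_isometry (A : H →L[ℂ] G) (D : H →L[ℂ] H)
    (hD : D = (ContinuousLinearMap.adjoint A) ∘L A) :
    ∃ Φ : ↥(LinearMap.range (D : H →ₗ[ℂ] H)).topologicalClosure →ₗᵢ[ℂ] G,
      Set.range ⇑A ⊆ Set.range ⇑Φ := by
  have key3 : ∀ x y : H, (⟪D x, y⟫_ℂ : ℂ) = ⟪A x, A y⟫_ℂ := by
    intro x y
    rw [hD]
    exact ContinuousLinearMap.adjoint_inner_left A y (A x)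
  have hpos : (0 : H →L[ℂ] H) ≤ D := by
    rw [hD, ContinuousLinearMap.nonneg_iff_isPositive]
    have := (ContinuousLinearMap.isPositive_one :
      (1 : G →L[ℂ] G).IsPositive).adjoint_conj A
    simpa [ContinuousLinearMap.one_def, ContinuousLinearMap.id_comp] using this
  set S : H →L[ℂ] H := CFC.sqrt D with hSdef
  have hSS : S ∘L S = D := CFC.sqrt_mul_sqrt_self D hpos
  have hSsa : IsSelfAdjoint S := IsSelfAdjoint.of_nonneg (CFC.sqrt_nonneg (a := D))
  have hSadj : ContinuousLinearMap.adjoint S = S :=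
    (ContinuousLinearMap.star_eq_adjoint S) ▸ hSsa
  have hΔadj : ContinuousLinearMap.adjoint D = D :=
    (ContinuousLinearMap.star_eq_adjoint D) ▸ (IsSelfAdjoint.of_nonneg hpos)
  have norm_eq : ∀ x : H, ‖S x‖ = ‖A x‖ := by
    intro x
    have h1 : (⟪S x, S x⟫_ℂ : ℂ) = ⟪A x, A x⟫_ℂ := by
      calc (⟪S x, S x⟫_ℂ : ℂ)
          = ⟪(ContinuousLinearMap.adjoint S) (S x), x⟫_ℂ := by
            rw [ContinuousLinearMap.adjoint_inner_left]
        _ = ⟪(S ∘L S) x, x⟫_ℂ := by rw [hSadj, ContinuousLinearMap.comp_apply]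
        _ = ⟪D x, x⟫_ℂ := by rw [hSS]
        _ = ⟪A x, A x⟫_ℂ := key3 x x
    have h2 : ‖S x‖ ^ 2 = ‖A x‖ ^ 2 := by
      rw [norm_sq_eq_re_inner (𝕜 := ℂ), norm_sq_eq_re_inner (𝕜 := ℂ), h1]
    calc ‖S x‖ = Real.sqrt (‖S x‖ ^ 2) := (Real.sqrt_sq (norm_nonneg _)).symm
      _ = Real.sqrt (‖A x‖ ^ 2) := by rw [h2]
      _ = ‖A x‖ := Real.sqrt_sq (norm_nonneg _)
  have hkerS : LinearMap.ker (S : H →ₗ[ℂ] H) = LinearMap.ker (A : H →ₗ[ℂ] G) := by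
    ext x
    simp only [LinearMap.mem_ker, ContinuousLinearMap.coe_coe]
    rw [← norm_eq_zero (a := S x), ← norm_eq_zero (a := A x), norm_eq]
  have hkerΔ : LinearMap.ker (D : H →ₗ[ℂ] H) = LinearMap.ker (A : H →ₗ[ℂ] G) := by
    ext x
    simp only [LinearMap.mem_ker, ContinuousLinearMap.coe_coe]
    constructor
    · intro hx
      have h0 : (⟪A x, A x⟫_ℂ : ℂ) = 0 := by
        rw [← key3, hx, inner_zero_left]
      exact inner_self_eq_zero.mp h0
    · intro hx
      rw [hD, ContinuousLinearMap.comp_apply, hx, map_zero]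
  have CR : (LinearMap.range (D : H →ₗ[ℂ] H)).topologicalClosure
      = (LinearMap.range (S : H →ₗ[ℂ] H)).topologicalClosure := by
    rw [← Submodule.orthogonal_orthogonal_eq_closure, ← Submodule.orthogonal_orthogonal_eq_closure,
      orthogonal_range', orthogonal_range', hΔadj, hSadj, hkerΔ, hkerS]
  have hwd : ∀ x y : H, S x = S y → A x = A y := by
    intro x y hxy
    have h0 : ‖A (x - y)‖ = 0 := by
      rw [← norm_eq, map_sub, hxy, sub_self, norm_zero]
    have h1 := norm_eq_zero.mp h0
    rw [map_sub, sub_eq_zero] at h1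
    exact h1
  let c : ↥(LinearMap.range (S : H →ₗ[ℂ] H)) → H := fun v => (LinearMap.mem_range.mp v.2).choose
  have hc : ∀ v : ↥(LinearMap.range (S : H →ₗ[ℂ] H)), S (c v) = (v : H) :=
    fun v => (LinearMap.mem_range.mp v.2).choose_spec
  let f0 : ↥(LinearMap.range (S : H →ₗ[ℂ] H)) →ₗ[ℂ] G :=
    { toFun := fun v => A (c v)
      map_add' := by
        intro u v
        have h1 : S (c (u + v)) = S (c u + c v) := by
          rw [map_add, hc, hc, hc]; rfl
        show A (c (u + v)) = A (c u) + A (c v)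
        rw [hwd _ _ h1, map_add]
      map_smul' := by
        intro m v
        have h1 : S (c (m • v)) = S (m • c v) := by
          rw [map_smul, hc, hc]; rfl
        show A (c (m • v)) = m • A (c v)
        rw [hwd _ _ h1, map_smul] }
  have hf0S : ∀ x : H, f0 ⟨S x, LinearMap.mem_range_self _ x⟩ = A x := by
    intro x
    exact hwd _ _ (hc ⟨S x, LinearMap.mem_range_self _ x⟩)
  have hf0norm : ∀ v : ↥(LinearMap.range (S : H →ₗ[ℂ] H)), ‖f0 v‖ = ‖v‖ := by
    intro v
    show ‖A (c v)‖ = ‖v‖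
    rw [← norm_eq, hc]
    rfl
  obtain ⟨Φ, hΦ⟩ := extend_isometry (LinearMap.range (S : H →ₗ[ℂ] H)) f0 hf0norm
  rw [CR]
  refine ⟨Φ, ?_⟩
  rintro _ ⟨x, rfl⟩
  refine ⟨⟨S x, (LinearMap.range (S : H →ₗ[ℂ] H)).le_topologicalClosure (LinearMap.mem_range_self _ x)⟩, ?_⟩
  have h2 := hΦ ⟨S x, LinearMap.mem_range_self _ x⟩
  rw [h2, hf0S]

end AbstractCore

/-- Let `T` be the pure `n`-tuple obtained by compressing the universal model
`W ⊗ I_G` to a co-invariant subspace `H ⊆ F²(H_n) ⊗ G` (so `T_i* = (W_i* ⊗ I_G)|_H`), and let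
`Δ = Δ_{g⁻¹}(T,T*)`. Then `dim closure(Δ H) ≤ dim G` (there is a linear isometric embedding of
`closure(range Δ)` into `G`), and if the dilation is minimal (the closed span of
`(W_α ⊗ I_G) H` is everything) then `dim closure(Δ H) = dim G` (there is a linear isometric
isomorphism). -/
theorem dilation_index_bound_and_minimal
    {n : ℕ} {G : Type*} [NormedAddCommGroup G] [InnerProductSpace ℂ G] [CompleteSpace G]
    (b a : Word n → ℝ) (hb : ∀ α, 0 < b α) (hb0 : b ([] : Word n) = 1)
    (ha0 : a ([] : Word n) = 1)
    (hbd : ∃ C : ℝ, ∀ (i : Fin n) (α : Word n), b α / b (i :: α) ≤ C)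
    (W : Fin n → (FockK n G →L[ℂ] FockK n G))
    (hW : ∀ (i : Fin n) (α : Word n) (k : G),
      W i (lp.single 2 α k) =
        ((Real.sqrt (b α / b (i :: α)) : ℝ) : ℂ) • lp.single 2 (i :: α) k)
    (hDelta : ∀ x : FockK n G,
      Tendsto (fun N : ℕ => deltaPartial a W N x) atTop
        (nhds (lp.single 2 ([] : Word n) ((x : ∀ _ : Word n, G) []))))
    (H : Submodule ℂ (FockK n G)) (hHcl : IsClosed (H : Set (FockK n G))) [CompleteSpace H]
    (hco : ∀ i : Fin n, ∀ x ∈ H, (W i).adjoint x ∈ H)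
    (T : Fin n → (H →L[ℂ] H))
    (hT : ∀ (i : Fin n) (h : H), ((T i).adjoint h : FockK n G) = (W i).adjoint (h : FockK n G))
    (ΔT : H →L[ℂ] H)
    (hΔT : ∀ x y : H,
      Tendsto (fun N : ℕ => (⟪deltaPartial a T N x, y⟫_ℂ : ℂ)) atTop (nhds ⟪ΔT x, y⟫_ℂ)) :
    Nonempty (↥(LinearMap.range (ΔT : H →ₗ[ℂ] H)).topologicalClosure →ₗᵢ[ℂ] G) ∧
    (closure (↑(Submodule.span ℂ
        (⋃ α : Word n, wordOp W α '' (H : Set (FockK n G)))) : Set (FockK n G)) = Set.univ →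
      Nonempty (↥(LinearMap.range (ΔT : H →ₗ[ℂ] H)).topologicalClosure ≃ₗᵢ[ℂ] G)) := by

  classical
  set A : H →L[ℂ] G := (ev0 n G).comp H.subtypeL with hA
  -- Step 1: the adjoints of the word operators of T and W agree on H
  have key1 : ∀ (α : Word n) (h : H),
      ((wordOp T α).adjoint h : FockK n G) = (wordOp W α).adjoint (h : FockK n G) := by
    intro α
    induction α with
    | nil =>
      intro h
      rw [wordOp_nil, wordOp_nil]
      simp [ContinuousLinearMap.one_def, ContinuousLinearMap.adjoint_id]
    | cons i α ih =>
      intro h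
      rw [wordOp_cons, wordOp_cons, ContinuousLinearMap.adjoint_comp,
        ContinuousLinearMap.adjoint_comp, ContinuousLinearMap.comp_apply,
        ContinuousLinearMap.comp_apply, ih ((T i).adjoint h), hT i h]
  -- Step 2: the partial defect sums have the same matrix elements
  have key2 : ∀ (N : ℕ) (x y : H),
      (⟪deltaPartial a T N x, y⟫_ℂ : ℂ)
        = ⟪deltaPartial a W N (x : FockK n G), (y : FockK n G)⟫_ℂ := by
    intro N x y
    simp only [deltaPartial, ContinuousLinearMap.sum_apply, ContinuousLinearMap.smul_apply,
      ContinuousLinearMap.comp_apply, sum_inner, inner_smul_left]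
    refine Finset.sum_congr rfl (fun p _ => Finset.sum_congr rfl (fun α _ => ?_))
    rw [show (⟪(a α : ℂ) • wordOp T α ((wordOp T α).adjoint x), y⟫_ℂ : ℂ) = (starRingEnd ℂ) (a α : ℂ) * ⟪wordOp T α ((wordOp T α).adjoint x), y⟫_ℂ by simp only [Submodule.coe_inner, Submodule.coe_smul, inner_smul_left]]
    congr 1
    calc (⟪wordOp T α ((wordOp T α).adjoint x), y⟫_ℂ : ℂ)
        = ⟪(wordOp T α).adjoint x, (wordOp T α).adjoint y⟫_ℂ :=
          (ContinuousLinearMap.adjoint_inner_right _ _ _).symm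
      _ = ⟪((wordOp T α).adjoint x : FockK n G), ((wordOp T α).adjoint y : FockK n G)⟫_ℂ := rfl
      _ = ⟪(wordOp W α).adjoint (x : FockK n G), (wordOp W α).adjoint (y : FockK n G)⟫_ℂ := by
          rw [key1, key1]
      _ = ⟪wordOp W α ((wordOp W α).adjoint (x : FockK n G)), (y : FockK n G)⟫_ℂ :=
          ContinuousLinearMap.adjoint_inner_right _ _ _
  -- Step 3: ΔT has matrix elements ⟪A x, A y⟫
  have key3 : ∀ x y : H, (⟪ΔT x, y⟫_ℂ : ℂ) = ⟪A x, A y⟫_ℂ := by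
    intro x y
    refine tendsto_nhds_unique (hΔT x y) ?_
    have h3 : Tendsto
        (fun N : ℕ => (⟪deltaPartial a W N (x : FockK n G), (y : FockK n G)⟫_ℂ : ℂ))
        atTop (nhds ⟪lp.single 2 ([] : Word n) (((x : FockK n G) : ∀ _ : Word n, G) []),
          (y : FockK n G)⟫_ℂ) :=
      (hDelta (x : FockK n G)).inner tendsto_const_nhds
    rw [lp.inner_single_left] at h3
    simp only [key2]
    exact h3
  -- Step 4: ΔT = A† A
  have key4 : ΔT = (ContinuousLinearMap.adjoint A) ∘L A := by
    refine ContinuousLinearMap.ext fun x => ?_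
    apply ext_inner_right ℂ
    intro y
    rw [key3]
    exact (ContinuousLinearMap.adjoint_inner_left A y (A x)).symm
  obtain ⟨Φ, hΦrange⟩ := exists_polar_isometry A ΔT key4
  constructor
  · exact ⟨Φ⟩
  -- minimal case
  · intro hmin
    -- range A is dense in G
    have hAdense : closure (Set.range ⇑A) = Set.univ := by
      have horthA : (LinearMap.range (A : H →ₗ[ℂ] G))ᗮ = ⊥ := by
        rw [Submodule.eq_bot_iff]
        intro g hg
        rw [Submodule.mem_orthogonal] at hg
        set u₀ : FockK n G := lp.single 2 ([] : Word n) g with hu₀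
        have hWadj : ∀ i : Fin n, (W i).adjoint u₀ = 0 := by
          intro i
          apply ext_inner_left ℂ
          intro v
          rw [inner_zero_right, ContinuousLinearMap.adjoint_inner_right, hu₀,
            lp.inner_single_right]
          have hzero : ((W i v : FockK n G) : ∀ _ : Word n, G) ([] : Word n) = 0 := by
            have hs : HasSum (fun α : Word n =>
                lp.single 2 α ((v : ∀ _ : Word n, G) α)) v := lp.hasSum_single (by norm_num) v
            have hs2 : HasSum (fun α : Word n =>
                ((ev0 n G).comp (W i)) (lp.single 2 α ((v : ∀ _ : Word n, G) α)))
                (((ev0 n G).comp (W i)) v) := hs.mapL _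
            have hterm : ∀ α : Word n,
                ((ev0 n G).comp (W i)) (lp.single 2 α ((v : ∀ _ : Word n, G) α)) = 0 := by
              intro α
              rw [ContinuousLinearMap.comp_apply, hW i α]
              rw [map_smul, ev0_apply, lp.single_apply_ne 2 _ _ (Ne.symm (List.cons_ne_nil i α))]
              simp
            simp only [hterm] at hs2
            have h4 := hs2.unique hasSum_zero
            simpa using h4
          rw [hzero, inner_zero_left]
        have horth : ∀ v ∈ Submodule.span ℂ
            (⋃ α : Word n, wordOp W α '' (H : Set (FockK n G))), (⟪v, u₀⟫_ℂ : ℂ) = 0 := by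
          intro v hv
          induction hv using Submodule.span_induction with
          | mem v hv =>
            obtain ⟨s, ⟨α, rfl⟩, h, hh, rfl⟩ := hv
            cases α with
            | nil =>
              rw [wordOp_nil]
              show (⟪h, u₀⟫_ℂ : ℂ) = 0
              rw [hu₀, lp.inner_single_right]
              exact hg (A ⟨h, hh⟩) ⟨⟨h, hh⟩, rfl⟩
            | cons i α' =>
              rw [← ContinuousLinearMap.adjoint_inner_right, wordOp_cons,
                ContinuousLinearMap.adjoint_comp, ContinuousLinearMap.comp_apply,
                hWadj i, map_zero, inner_zero_right]
          | zero => rw [inner_zero_left]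
          | add x y _ _ hx hy => rw [inner_add_left, hx, hy, add_zero]
          | smul t x _ hx => rw [inner_smul_left, hx, mul_zero]
        have hu0 : u₀ = 0 := by
          have hall : ∀ v : FockK n G, (⟪v, u₀⟫_ℂ : ℂ) = 0 := by
            intro v
            have hvmem : v ∈ closure (↑(Submodule.span ℂ
                (⋃ α : Word n, wordOp W α '' (H : Set (FockK n G)))) : Set (FockK n G)) := by
              rw [hmin]; trivial
            have hclosed : IsClosed {v : FockK n G | (⟪v, u₀⟫_ℂ : ℂ) = 0} :=
              isClosed_eq (Continuous.inner continuous_id continuous_const) continuous_const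
            exact closure_minimal (fun w hw => horth w hw) hclosed hvmem
          exact inner_self_eq_zero.mp (hall u₀)
        have hg0 : g = (u₀ : ∀ _ : Word n, G) ([] : Word n) := by
          rw [hu₀]
          exact (lp.single_apply_self (E := fun _ : Word n => G) 2 ([] : Word n) g).symm
        rw [hg0, hu0]
        simp
      have h1 : (LinearMap.range (A : H →ₗ[ℂ] G)).topologicalClosure = ⊤ := by
        rw [← Submodule.orthogonal_orthogonal_eq_closure, horthA,
          Submodule.bot_orthogonal_eq_top]
      have h2 := congrArg (fun (K : Submodule ℂ G) => (K : Set G)) h1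
      simpa [Submodule.topologicalClosure_coe, LinearMap.coe_range] using h2
    haveI : CompleteSpace ((LinearMap.range (ΔT : H →ₗ[ℂ] H)).topologicalClosure) :=
      IsClosed.completeSpace_coe (hs := Submodule.isClosed_topologicalClosure _)
    have hclosedrange : IsClosed (Set.range ⇑Φ) :=
      Φ.isometry.isClosedEmbedding.isClosed_range
    have hsurj : Function.Surjective ⇑Φ := by
      intro g
      have hmem : g ∈ closure (Set.range ⇑A) := by rw [hAdense]; trivial
      exact closure_minimal hΦrange hclosedrange hmem
    exact ⟨LinearIsometryEquiv.ofSurjective Φ hsurj⟩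
end
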